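/- For every real constant C₁ > 0 there exists N > 0 such that for all integers n > N: 1 + (C₁/9) · n^{−4/3} < exp(2·C₁·n^{2/3} − C₁·(n+1)^{2/3} − C₁·(n−1)^{2/3}) < 1 + (4·C₁/9) · n^{−4/3}. -/

import Mathlib

open Real Filter Set

noncomputable def hh (x : ℝ) : ℝ := 2 - (1+x) ^ ((2:ℝ)/3) - (1-x) ^ ((2:ℝ)/3)
noncomputable def hh1 (x : ℝ) : ℝ :=
  (2/3) * (1-x) ^ (-(1:ℝ)/3) - (2/3) * (1+x) ^ (-(1:ℝ)/3)
noncomputable def hh2 (x : ℝ) : ℝ :=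
  (2/9) * (1-x) ^ (-(4:ℝ)/3) + (2/9) * (1+x) ^ (-(4:ℝ)/3)

lemma hasDerivAt_hh {x : ℝ} (hx : x ∈ Ioo (-1:ℝ) 1) : HasDerivAt hh (hh1 x) x := by
  obtain ⟨h1, h2⟩ := hx
  have hA : HasDerivAt (fun y : ℝ => (1+y) ^ ((2:ℝ)/3))
      (1 * ((2:ℝ)/3) * (1+x) ^ ((2:ℝ)/3 - 1)) x :=
    ((hasDerivAt_id x).const_add 1).rpow_const (Or.inl (by simp only [id_eq]; intro h; linarith))
  have hB : HasDerivAt (fun y : ℝ => (1-y) ^ ((2:ℝ)/3))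
      ((-1) * ((2:ℝ)/3) * (1-x) ^ ((2:ℝ)/3 - 1)) x :=
    ((hasDerivAt_id x).const_sub 1).rpow_const (Or.inl (by simp only [id_eq]; intro h; linarith))
  have := (hA.const_sub 2).sub hB
  refine this.congr_deriv ?_
  rw [show (2:ℝ)/3 - 1 = -(1:ℝ)/3 by norm_num]
  unfold hh1; ring

lemma hasDerivAt_hh1 {x : ℝ} (hx : x ∈ Ioo (-1:ℝ) 1) : HasDerivAt hh1 (hh2 x) x := by
  obtain ⟨h1, h2⟩ := hx
  have hA : HasDerivAt (fun y : ℝ => (1+y) ^ (-(1:ℝ)/3))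
      (1 * (-(1:ℝ)/3) * (1+x) ^ (-(1:ℝ)/3 - 1)) x :=
    ((hasDerivAt_id x).const_add 1).rpow_const (Or.inl (by simp only [id_eq]; intro h; linarith))
  have hB : HasDerivAt (fun y : ℝ => (1-y) ^ (-(1:ℝ)/3))
      ((-1) * (-(1:ℝ)/3) * (1-x) ^ (-(1:ℝ)/3 - 1)) x :=
    ((hasDerivAt_id x).const_sub 1).rpow_const (Or.inl (by simp only [id_eq]; intro h; linarith))
  have := (hB.const_mul (2/3 : ℝ)).sub (hA.const_mul (2/3 : ℝ))
  refine this.congr_deriv ?_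
  rw [show -(1:ℝ)/3 - 1 = -(4:ℝ)/3 by norm_num]
  unfold hh2; ring

lemma mem01 : ∀ᶠ x in nhdsWithin (0:ℝ) (Ioi 0), x ∈ Ioo (-1:ℝ) 1 := by
  filter_upwards [Ioo_mem_nhdsGT_of_mem (by constructor <;> norm_num : (0:ℝ) ∈ Ico (0:ℝ) 1)]
    with x hx
  exact ⟨by linarith [hx.1], hx.2⟩

lemma tendsto_hh2 : Filter.Tendsto hh2 (nhdsWithin (0:ℝ) (Ioi 0)) (nhds (4/9)) := by
  have hc : ContinuousAt hh2 0 := by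
    have c1 : ContinuousAt (fun x : ℝ => (1-x) ^ (-(4:ℝ)/3)) 0 :=
      (Real.continuousAt_rpow_const _ _ (Or.inl (by norm_num))).comp
        (by fun_prop : ContinuousAt (fun x : ℝ => 1 - x) 0)
    have c2 : ContinuousAt (fun x : ℝ => (1+x) ^ (-(4:ℝ)/3)) 0 :=
      (Real.continuousAt_rpow_const _ _ (Or.inl (by norm_num))).comp
        (by fun_prop : ContinuousAt (fun x : ℝ => 1 + x) 0)
    exact ((c1.const_mul _).add (c2.const_mul _))
  have := hc.tendsto.mono_left (nhdsWithin_le_nhds (s := Ioi 0))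
  convert this using 2
  unfold hh2
  simp [Real.one_rpow]
  norm_num

lemma key1 : Filter.Tendsto (fun x => hh1 x / (2*x)) (nhdsWithin (0:ℝ) (Ioi 0)) (nhds (2/9)) := by
  apply HasDerivAt.lhopital_zero_nhdsGT (f' := hh2) (g' := fun _ => (2:ℝ))
  · filter_upwards [mem01] with x hx using hasDerivAt_hh1 hx
  · filter_upwards with x using by simpa using (hasDerivAt_id x).const_mul (2:ℝ)
  · filter_upwards with x using two_ne_zero
  · have h0 : HasDerivAt hh1 (hh2 0) 0 := hasDerivAt_hh1 (by constructor <;> norm_num)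
    have := h0.continuousAt.tendsto.mono_left (nhdsWithin_le_nhds (s := Ioi 0))
    convert this using 2
    unfold hh1; simp [Real.one_rpow]
  · have : Filter.Tendsto (fun x : ℝ => 2 * x) (nhds 0) (nhds 0) := by
      simpa using (continuous_mul_left (2:ℝ)).tendsto (0:ℝ)
    exact this.mono_left (nhdsWithin_le_nhds (s := Ioi 0))
  · have := tendsto_hh2.div_const 2
    convert this using 2
    norm_num

lemma key2 : Filter.Tendsto (fun x => hh x / x^2) (nhdsWithin (0:ℝ) (Ioi 0)) (nhds (2/9)) := by
  apply HasDerivAt.lhopital_zero_nhdsGT (f' := hh1) (g' := fun x => 2*x)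
  · filter_upwards [mem01] with x hx using hasDerivAt_hh hx
  · filter_upwards with x using by simpa using hasDerivAt_pow 2 x
  · filter_upwards [self_mem_nhdsWithin] with x hx
    have : (0:ℝ) < x := hx
    positivity
  · have h0 : HasDerivAt hh (hh1 0) 0 := hasDerivAt_hh (by constructor <;> norm_num)
    have := h0.continuousAt.tendsto.mono_left (nhdsWithin_le_nhds (s := Ioi 0))
    convert this using 2
    unfold hh; simp [Real.one_rpow]; norm_num
  · have : Filter.Tendsto (fun x : ℝ => x^2) (nhds 0) (nhds 0) := by
      simpa using (continuous_pow 2).tendsto (0:ℝ)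
    exact this.mono_left (nhdsWithin_le_nhds (s := Ioi 0))
  · exact key1

noncomputable def dd (n : ℕ) : ℝ :=
  2 * (n:ℝ) ^ ((2:ℝ)/3) - ((n:ℝ)+1) ^ ((2:ℝ)/3) - ((n:ℝ)-1) ^ ((2:ℝ)/3)

lemma dd_eq {n : ℕ} (hn : 1 ≤ n) :
    dd n * (n:ℝ) ^ ((4:ℝ)/3) = hh (1/(n:ℝ)) * (n:ℝ)^2 := by
  have hn0 : (0:ℝ) < n := by exact_mod_cast hn
  have h1 : ((n:ℝ)+1) ^ ((2:ℝ)/3) = (n:ℝ) ^ ((2:ℝ)/3) * (1+1/(n:ℝ)) ^ ((2:ℝ)/3) := by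
    rw [← Real.mul_rpow hn0.le (by positivity)]
    congr 1; field_simp
  have hb : (0:ℝ) ≤ 1 - 1/(n:ℝ) := by
    have : 1/(n:ℝ) ≤ 1 := by
      rw [div_le_one hn0]; exact_mod_cast hn
    linarith
  have h2 : ((n:ℝ)-1) ^ ((2:ℝ)/3) = (n:ℝ) ^ ((2:ℝ)/3) * (1-1/(n:ℝ)) ^ ((2:ℝ)/3) := by
    rw [← Real.mul_rpow hn0.le hb]
    congr 1; field_simp
  have h3 : (n:ℝ) ^ ((2:ℝ)/3) * (n:ℝ) ^ ((4:ℝ)/3) = (n:ℝ)^2 := by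
    rw [← Real.rpow_add hn0, show (2:ℝ)/3 + 4/3 = ((2:ℕ):ℝ) by norm_num,
      Real.rpow_natCast]
  unfold dd hh
  linear_combination (-(n:ℝ) ^ ((4:ℝ)/3)) * h1 + (-(n:ℝ) ^ ((4:ℝ)/3)) * h2 +
    (2 - (1+1/(n:ℝ)) ^ ((2:ℝ)/3) - (1-1/(n:ℝ)) ^ ((2:ℝ)/3)) * h3

lemma tendsto_dd : Filter.Tendsto (fun n : ℕ => dd n * (n:ℝ) ^ ((4:ℝ)/3)) atTop
    (nhds (2/9)) := by
  have hcomp : Filter.Tendsto (fun n : ℕ => (1:ℝ)/n) atTop (nhdsWithin (0:ℝ) (Ioi 0)) := by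
    rw [tendsto_nhdsWithin_iff]
    refine ⟨tendsto_one_div_atTop_nhds_zero_nat, ?_⟩
    filter_upwards [eventually_ge_atTop 1] with n hn
    have : (0:ℝ) < n := by exact_mod_cast hn
    exact one_div_pos.mpr this
  have := key2.comp hcomp
  apply this.congr'
  filter_upwards [eventually_ge_atTop 1] with n hn
  have hn0 : (0:ℝ) < n := by exact_mod_cast hn
  rw [Function.comp, dd_eq hn]
  field_simp

lemma tendsto_dd0 : Filter.Tendsto (fun n : ℕ => dd n) atTop (nhds 0) := by
  have hneg : Filter.Tendsto (fun n : ℕ => (n:ℝ) ^ (-((4:ℝ)/3))) atTop (nhds 0) :=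
    (tendsto_rpow_neg_atTop (by norm_num : (0:ℝ) < 4/3)).comp tendsto_natCast_atTop_atTop
  have := tendsto_dd.mul hneg
  rw [mul_zero] at this
  apply this.congr'
  filter_upwards [eventually_ge_atTop 1] with n hn
  have hn0 : (0:ℝ) < n := by exact_mod_cast hn
  rw [mul_assoc, ← Real.rpow_add hn0]
  norm_num

lemma exp_slope : Filter.Tendsto (fun t : ℝ => (Real.exp t - 1) / t)
    (nhdsWithin (0:ℝ) {(0:ℝ)}ᶜ) (nhds 1) := by
  have h := hasDerivAt_iff_tendsto_slope.mp (Real.hasDerivAt_exp 0)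
  rw [Real.exp_zero] at h
  apply h.congr
  intro t
  simp [slope_def_field, div_eq_div_iff]

/-- For every real `C₁ > 0` there is `N > 0` such that for all integers `n > N`, the quantity
`exp (2C₁n^(2/3) − C₁(n+1)^(2/3) − C₁(n−1)^(2/3))` lies strictly between
`1 + (C₁/9)·n^(−4/3)` and `1 + (4C₁/9)·n^(−4/3)`. -/
theorem exp_concavity_bounds (C₁ : ℝ) (hC₁ : 0 < C₁) :
    ∃ N : ℕ, 0 < N ∧ ∀ n : ℕ, N < n →
      1 + C₁ / 9 * (n : ℝ) ^ (-(4 : ℝ) / 3) <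
        Real.exp (2 * C₁ * (n : ℝ) ^ ((2 : ℝ) / 3) - C₁ * ((n : ℝ) + 1) ^ ((2 : ℝ) / 3)
          - C₁ * ((n : ℝ) - 1) ^ ((2 : ℝ) / 3)) ∧
      Real.exp (2 * C₁ * (n : ℝ) ^ ((2 : ℝ) / 3) - C₁ * ((n : ℝ) + 1) ^ ((2 : ℝ) / 3)
          - C₁ * ((n : ℝ) - 1) ^ ((2 : ℝ) / 3)) <
        1 + 4 * C₁ / 9 * (n : ℝ) ^ (-(4 : ℝ) / 3) := by
  -- eventually `dd n > 0`
  have hpos : ∀ᶠ n : ℕ in atTop, 0 < dd n := by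
    have h1 := tendsto_dd.eventually (eventually_gt_nhds (by norm_num : (0:ℝ) < 2/9))
    filter_upwards [h1, eventually_ge_atTop 1] with n hn hn1
    have hn0 : (0:ℝ) < n := by exact_mod_cast hn1
    have hP : (0:ℝ) < (n:ℝ) ^ ((4:ℝ)/3) := Real.rpow_pos_of_pos hn0 _
    nlinarith
  -- `C₁ * dd n` tends to `0` within `{0}ᶜ`
  have ht : Filter.Tendsto (fun n : ℕ => C₁ * dd n) atTop (nhdsWithin (0:ℝ) {(0:ℝ)}ᶜ) := by
    rw [tendsto_nhdsWithin_iff]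
    constructor
    · simpa using tendsto_dd0.const_mul C₁
    · filter_upwards [hpos] with n hn
      simp only [Set.mem_compl_iff, Set.mem_singleton_iff]
      positivity
  -- main limit
  have hF : Filter.Tendsto
      (fun n : ℕ => (Real.exp (C₁ * dd n) - 1) * (n:ℝ) ^ ((4:ℝ)/3)) atTop
      (nhds (1 * (C₁ * (2/9)))) := by
    have := (exp_slope.comp ht).mul ((tendsto_dd.const_mul C₁))
    apply this.congr'
    filter_upwards [hpos] with n hn
    have hne : C₁ * dd n ≠ 0 := by positivity
    simp only [Function.comp_apply]
    field_simp
  have hmem : (1 : ℝ) * (C₁ * (2/9)) ∈ Set.Ioo (C₁/9) (4*C₁/9) := by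
    constructor <;> nlinarith
  have hIoo := hF.eventually (Ioo_mem_nhds hmem.1 hmem.2)
  obtain ⟨N, hN⟩ := eventually_atTop.mp (hIoo.and (eventually_ge_atTop 1))
  refine ⟨N+1, Nat.succ_pos N, ?_⟩
  intro n hn
  obtain ⟨⟨hlo, hhi⟩, hn1⟩ := hN n (by omega)
  have hn0 : (0:ℝ) < n := by exact_mod_cast hn1
  have hP : (0:ℝ) < (n:ℝ) ^ ((4:ℝ)/3) := Real.rpow_pos_of_pos hn0 _
  have hexp : 2 * C₁ * (n:ℝ) ^ ((2:ℝ)/3) - C₁ * ((n:ℝ)+1) ^ ((2:ℝ)/3)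
      - C₁ * ((n:ℝ)-1) ^ ((2:ℝ)/3) = C₁ * dd n := by unfold dd; ring
  have hneg : (n:ℝ) ^ (-(4:ℝ)/3) = ((n:ℝ) ^ ((4:ℝ)/3))⁻¹ := by
    rw [show (-(4:ℝ)/3) = -((4:ℝ)/3) by norm_num, Real.rpow_neg hn0.le]
  rw [hexp, hneg]
  constructor
  · have h := (div_lt_iff₀ hP).mpr hlo
    rw [div_eq_mul_inv] at h
    linarith
  · have h := (lt_div_iff₀ hP).mpr hhi
    rw [div_eq_mul_inv] at h
    linarith
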